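/- Let aₘ = binom(2m−1, m) for m ≥ 1. For each n ≥ 1 let Aₙ′ be the (n+1)×(n+1) matrix whose first row is (1, 4, 4², …, 4ⁿ) and whose (i+1)-th row (for 1 ≤ i ≤ n) is (a_{i+1}, a_{i+2}, …, a_{i+n+1}). Then det Aₙ′ = (−1)ⁿ (n+1). -/

import Mathlib

open Finset Matrix

def catZ (m : ℕ) : ℤ := (Nat.choose (2*m) m : ℤ) - (Nat.choose (2*m) (m+1) : ℤ)

lemma P1 (m : ℕ) (hm : 1 ≤ m) :
    (Nat.choose (2*(m+1) - 1) (m+1) : ℤ) = 4 * (Nat.choose (2*m - 1) m : ℤ) - catZ m := by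
  obtain ⟨k, rfl⟩ : ∃ k, m = k+1 := ⟨m-1, by omega⟩
  have h1 : 2*(k+1) - 1 = 2*k+1 := by omega
  have h2 : 2*(k+1+1) - 1 = 2*k+3 := by omega
  have h3 : 2*(k+1) = 2*k+2 := by omega
  rw [h1, h2]; unfold catZ; rw [h3]
  have e1 : Nat.choose (2*k+3) (k+1+1) = Nat.choose (2*k+2) (k+1) + Nat.choose (2*k+2) (k+2) :=
    Nat.choose_succ_succ (2*k+2) (k+1)
  have e2 : Nat.choose (2*k+2) (k+1) = Nat.choose (2*k+1) k + Nat.choose (2*k+1) (k+1) :=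
    Nat.choose_succ_succ (2*k+1) k
  have e3 : Nat.choose (2*k+1) k = Nat.choose (2*k+1) (k+1) := by
    have := Nat.choose_symm (n := 2*k+1) (k := k+1) (by omega)
    simpa [show 2*k+1 - (k+1) = k by omega] using this
  rw [e1, e2, e3]
  push_cast
  ring

lemma vandZ (a b s : ℕ) :
    ∑ u ∈ range (s+1), (Nat.choose a u : ℤ) * (Nat.choose b (s-u) : ℤ)
      = (Nat.choose (a+b) s : ℤ) := by
  have h : ∑ u ∈ range (s+1), Nat.choose a u * Nat.choose b (s-u) = Nat.choose (a+b) s := by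
    rw [Nat.add_choose_eq, Nat.sum_antidiagonal_eq_sum_range_succ_mk]
  exact_mod_cast h

lemma pointwise (i u : ℕ) :
    ((i:ℤ)+1-u) * ((i:ℤ)+2-u) * (Nat.choose (2*i+3) u : ℤ)
      = (2*(i:ℤ)+3)*(2*(i:ℤ)+2) * (if 2 ≤ u then (Nat.choose (2*i+1) (u-2) : ℤ) else 0)
        - (2*(i:ℤ)+3)*(2*(i:ℤ)+2) * (if 1 ≤ u then (Nat.choose (2*i+2) (u-1) : ℤ) else 0)
        + ((i:ℤ)+1)*((i:ℤ)+2) * (Nat.choose (2*i+3) u : ℤ) := by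
  match u with
  | 0 => norm_num
  | 1 =>
      norm_num [Nat.choose_one_right]
      push_cast
      ring
  | (v+2) =>
      have h1 : (Nat.choose (2*i+3) (v+2) : ℤ) * ((v:ℤ)+2)
          = (2*(i:ℤ)+3) * (Nat.choose (2*i+2) (v+1) : ℤ) := by
        have := Nat.add_one_mul_choose_eq (2*i+2) (v+1)
        push_cast at this
        linarith [this]
      have h2 : (Nat.choose (2*i+2) (v+1) : ℤ) * ((v:ℤ)+1)
          = (2*(i:ℤ)+2) * (Nat.choose (2*i+1) v : ℤ) := by
        have := Nat.add_one_mul_choose_eq (2*i+1) v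
        push_cast at this
        linarith [this]
      have e2 : v+2-2 = v := by omega
      have e1 : v+2-1 = v+1 := by omega
      rw [if_pos (by omega), if_pos (by omega), e1, e2]
      push_cast
      linear_combination ((v:ℤ)-2*(i:ℤ)-1)*h1 + (2*(i:ℤ)+3)*h2

lemma claimR (i j : ℕ) :
    (2*(i:ℤ)+3)*(2*(i:ℤ)+2) * (Nat.choose (2*i+2*j+4) (i+j+1) : ℤ)
      - (2*(i:ℤ)+3)*(2*(i:ℤ)+2) * (Nat.choose (2*i+2*j+5) (i+j+2) : ℤ)
      + ((i:ℤ)+1)*((i:ℤ)+2) * (Nat.choose (2*i+2*j+6) (i+j+3) : ℤ)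
      = 2*((i:ℤ)+1)*((j:ℤ)+1) * catZ (i+j+2) := by
  set t := i + j with ht
  have e1 : 2*i+2*j+4 = 2*t+4 := by omega
  have e2 : 2*i+2*j+5 = 2*t+5 := by omega
  have e3 : 2*i+2*j+6 = 2*t+6 := by omega
  have e4 : i+j+1 = t+1 := by omega
  have e5 : i+j+2 = t+2 := by omega
  have e6 : i+j+3 = t+3 := by omega
  rw [e1, e2, e3, e4, e5, e6]
  have g1 : (Nat.choose (2*t+4) (t+2) : ℤ) * ((t:ℤ)+2) = (Nat.choose (2*t+4) (t+1) : ℤ) * ((t:ℤ)+3) := by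
    have := Nat.choose_succ_right_eq (2*t+4) (t+1)
    have hs : 2*t+4 - (t+1) = t+3 := by omega
    rw [hs] at this
    exact_mod_cast this
  have g2 : (Nat.choose (2*t+4) (t+3) : ℤ) * ((t:ℤ)+3) = (Nat.choose (2*t+4) (t+2) : ℤ) * ((t:ℤ)+2) := by
    have := Nat.choose_succ_right_eq (2*t+4) (t+2)
    have hs : 2*t+4 - (t+2) = t+2 := by omega
    rw [hs] at this
    exact_mod_cast this
  have g3 : (Nat.choose (2*t+5) (t+2) : ℤ) = (Nat.choose (2*t+4) (t+1) : ℤ) + (Nat.choose (2*t+4) (t+2) : ℤ) := by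
    exact_mod_cast congrArg (Nat.cast (R := ℤ)) (Nat.choose_succ_succ (2*t+4) (t+1))
  have g4 : (Nat.choose (2*t+6) (t+3) : ℤ) = (Nat.choose (2*t+5) (t+2) : ℤ) + (Nat.choose (2*t+5) (t+3) : ℤ) := by
    exact_mod_cast congrArg (Nat.cast (R := ℤ)) (Nat.choose_succ_succ (2*t+5) (t+2))
  have g5 : (Nat.choose (2*t+5) (t+3) : ℤ) = (Nat.choose (2*t+4) (t+2) : ℤ) + (Nat.choose (2*t+4) (t+3) : ℤ) := by
    exact_mod_cast congrArg (Nat.cast (R := ℤ)) (Nat.choose_succ_succ (2*t+4) (t+2))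
  unfold catZ
  have e7 : 2*(t+2) = 2*t+4 := by omega
  have e8 : t+2+1 = t+3 := by omega
  rw [e7, e8, g4, g5, g3]
  have htne : ((t:ℤ)+3) ≠ 0 := by positivity
  apply mul_left_cancel₀ htne
  have hij : (t:ℤ) = (i:ℤ) + (j:ℤ) := by exact_mod_cast ht
  rw [hij] at g1 g2 ⊢
  linear_combination (-((i:ℤ)+1)*((i:ℤ)+2))*g1 + (((i:ℤ)+1)*((i:ℤ)+2)+2*((i:ℤ)+1)*((j:ℤ)+1))*g2

section keysum
variable (i j : ℕ)

def F (u : ℕ) : ℤ :=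
  ((i:ℤ)+1-u) * ((i:ℤ)+2-u) * (Nat.choose (2*i+3) u : ℤ) * (Nat.choose (2*j+3) (i+j+3-u) : ℤ)

def term (k : ℕ) : ℤ :=
  ((k:ℤ)+1)*((k:ℤ)+2) * (Nat.choose (2*i+3) (i-k) : ℤ) * (Nat.choose (2*j+3) (j-k) : ℤ)

lemma chunk1 (hj : j ≤ i) :
    ∑ u ∈ range (i+1), F i j u = ∑ k ∈ range (j+1), term i j k := by
  rw [← Finset.sum_range_reflect]
  have step : ∀ k ∈ range (i+1), F i j (i+1-1-k)
      = if k ≤ j then term i j k else 0 := by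
    intro k hk
    have hki : k ≤ i := by simpa using Nat.lt_succ_iff.mp (mem_range.mp hk)
    have h0 : i+1-1-k = i-k := by omega
    rw [h0]
    unfold F term
    have hc1 : ((i - k : ℕ) : ℤ) = (i:ℤ) - k := Nat.cast_sub hki
    have hc2 : i+j+3-(i-k) = j+3+k := by omega
    rw [hc1, hc2]
    by_cases hkj : k ≤ j
    · rw [if_pos hkj]
      have hsym : Nat.choose (2*j+3) (j+3+k) = Nat.choose (2*j+3) (j-k) := by
        have h := Nat.choose_symm (n := 2*j+3) (k := j+3+k) (by omega)
        rw [show 2*j+3 - (j+3+k) = j-k by omega] at h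
        exact h.symm
      rw [hsym]; ring
    · rw [if_neg hkj]
      have : Nat.choose (2*j+3) (j+3+k) = 0 := Nat.choose_eq_zero_of_lt (by omega)
      rw [this]; push_cast; ring
  rw [Finset.sum_congr rfl step]
  rw [← Finset.sum_subset (Finset.range_subset_range.mpr (by omega : j+1 ≤ i+1))
    (fun x _ hx => if_neg (by simp at hx; omega))]
  exact Finset.sum_congr rfl fun x hx => if_pos (by simp at hx; omega)

lemma chunk2 (hj : j ≤ i) :
    ∑ t ∈ range (j+3), F i j (i+1+t) = ∑ k ∈ range (j+1), term i j k := by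
  rw [Finset.sum_range_succ' (fun t => F i j (i+1+t)) (j+2)]
  have hF0 : F i j (i+1+0) = 0 := by
    unfold F; push_cast; ring
  rw [hF0, add_zero]
  rw [Finset.sum_range_succ' (fun t => F i j (i+1+(t+1))) (j+1)]
  have hF1 : F i j (i+1+(0+1)) = 0 := by
    unfold F; push_cast; ring
  rw [hF1, add_zero]
  refine Finset.sum_congr rfl fun k hk => ?_
  have hkj : k ≤ j := by simpa [Nat.lt_succ_iff] using hk
  have h0 : i+1+(k+1+1) = i+3+k := by omega
  rw [h0]
  unfold F term
  have hc2 : i+j+3-(i+3+k) = j-k := by omega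
  have hsym : Nat.choose (2*i+3) (i+3+k) = Nat.choose (2*i+3) (i-k) := by
    have h := Nat.choose_symm (n := 2*i+3) (k := i+3+k) (by omega)
    rw [show 2*i+3 - (i+3+k) = i-k by omega] at h
    exact h.symm
  rw [hc2, hsym]
  push_cast
  ring

def ite2 (u : ℕ) : ℤ := if 2 ≤ u then (Nat.choose (2*i+1) (u-2) : ℤ) else 0
def ite1 (u : ℕ) : ℤ := if 1 ≤ u then (Nat.choose (2*i+2) (u-1) : ℤ) else 0
def hh (u : ℕ) : ℤ := (Nat.choose (2*j+3) (i+j+3-u) : ℤ)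

lemma T0eval : ∑ u ∈ range (i+j+4), (Nat.choose (2*i+3) u : ℤ) * hh i j u
    = (Nat.choose (2*i+2*j+6) (i+j+3) : ℤ) := by
  have h := vandZ (2*i+3) (2*j+3) (i+j+3)
  rw [show (i+j+3)+1 = i+j+4 by omega, show 2*i+3+(2*j+3) = 2*i+2*j+6 by omega] at h
  exact h

lemma T1eval : ∑ u ∈ range (i+j+4), ite1 i u * hh i j u
    = (Nat.choose (2*i+2*j+5) (i+j+2) : ℤ) := by
  rw [show i+j+4 = (i+j+3)+1 by omega,
    Finset.sum_range_succ' (fun u => ite1 i u * hh i j u) (i+j+3)]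
  have h0 : ite1 i 0 * hh i j 0 = 0 := by unfold ite1; norm_num
  rw [h0, add_zero]
  have hcongr : ∀ u ∈ range (i+j+3), ite1 i (u+1) * hh i j (u+1)
      = (Nat.choose (2*i+2) u : ℤ) * (Nat.choose (2*j+3) (i+j+2-u) : ℤ) := by
    intro u _
    unfold ite1 hh
    rw [if_pos (by omega), show u+1-1 = u by omega, show i+j+3-(u+1) = i+j+2-u by omega]
  rw [Finset.sum_congr rfl hcongr]
  have h := vandZ (2*i+2) (2*j+3) (i+j+2)
  rw [show (i+j+2)+1 = i+j+3 by omega, show 2*i+2+(2*j+3) = 2*i+2*j+5 by omega] at h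
  exact h

lemma T2eval : ∑ u ∈ range (i+j+4), ite2 i u * hh i j u
    = (Nat.choose (2*i+2*j+4) (i+j+1) : ℤ) := by
  rw [show i+j+4 = (i+j+3)+1 by omega,
    Finset.sum_range_succ' (fun u => ite2 i u * hh i j u) (i+j+3)]
  have h0 : ite2 i 0 * hh i j 0 = 0 := by unfold ite2; norm_num
  rw [h0, add_zero, show i+j+3 = (i+j+2)+1 by omega,
    Finset.sum_range_succ' (fun u => ite2 i (u+1) * hh i j (u+1)) (i+j+2)]
  have h1 : ite2 i (0+1) * hh i j (0+1) = 0 := by unfold ite2; norm_num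
  rw [h1, add_zero]
  have hcongr : ∀ u ∈ range (i+j+2), ite2 i (u+1+1) * hh i j (u+1+1)
      = (Nat.choose (2*i+1) u : ℤ) * (Nat.choose (2*j+3) (i+j+1-u) : ℤ) := by
    intro u _
    unfold ite2 hh
    rw [if_pos (by omega), show u+1+1-2 = u by omega, show i+j+3-(u+1+1) = i+j+1-u by omega]
  rw [Finset.sum_congr rfl hcongr]
  have h := vandZ (2*i+1) (2*j+3) (i+j+1)
  rw [show (i+j+1)+1 = i+j+2 by omega, show 2*i+1+(2*j+3) = 2*i+2*j+4 by omega] at h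
  exact h

lemma fullsum : ∑ u ∈ range (i+j+4), F i j u
    = (2*(i:ℤ)+3)*(2*(i:ℤ)+2) * (Nat.choose (2*i+2*j+4) (i+j+1) : ℤ)
      - (2*(i:ℤ)+3)*(2*(i:ℤ)+2) * (Nat.choose (2*i+2*j+5) (i+j+2) : ℤ)
      + ((i:ℤ)+1)*((i:ℤ)+2) * (Nat.choose (2*i+2*j+6) (i+j+3) : ℤ) := by
  have hpt : ∀ u ∈ range (i+j+4), F i j u
      = (2*(i:ℤ)+3)*(2*(i:ℤ)+2) * (ite2 i u * hh i j u)
        - (2*(i:ℤ)+3)*(2*(i:ℤ)+2) * (ite1 i u * hh i j u)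
        + ((i:ℤ)+1)*((i:ℤ)+2) * ((Nat.choose (2*i+3) u : ℤ) * hh i j u) := by
    intro u _
    have h := pointwise i u
    unfold F ite2 ite1 hh
    calc ((i:ℤ)+1-u) * ((i:ℤ)+2-u) * (Nat.choose (2*i+3) u : ℤ) * (Nat.choose (2*j+3) (i+j+3-u) : ℤ)
        = (((i:ℤ)+1-u) * ((i:ℤ)+2-u) * (Nat.choose (2*i+3) u : ℤ)) * (Nat.choose (2*j+3) (i+j+3-u) : ℤ) := by ring
      _ = _ := by rw [h]; ring
  rw [Finset.sum_congr rfl hpt]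
  rw [Finset.sum_add_distrib, Finset.sum_sub_distrib, ← Finset.mul_sum, ← Finset.mul_sum,
    ← Finset.mul_sum, T0eval, T1eval, T2eval]

lemma keySum (hj : j ≤ i) :
    ∑ k ∈ range (j+1), term i j k = ((i:ℤ)+1)*((j:ℤ)+1) * catZ (i+j+2) := by
  have hsplit : ∑ u ∈ range ((i+1)+(j+3)), F i j u
      = (∑ u ∈ range (i+1), F i j u) + ∑ t ∈ range (j+3), F i j (i+1+t) :=
    Finset.sum_range_add (F i j) (i+1) (j+3)
  rw [show (i+1)+(j+3) = i+j+4 by omega] at hsplit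
  have h2 : (2:ℤ) * ∑ k ∈ range (j+1), term i j k = ∑ u ∈ range (i+j+4), F i j u := by
    rw [hsplit, chunk1 i j hj, chunk2 i j hj]; ring
  have h3 := fullsum i j
  have h4 := claimR i j
  apply mul_left_cancel₀ (show (2:ℤ) ≠ 0 by norm_num)
  rw [h2, h3]
  linarith [h4]

end keysum

lemma entry_sum (n i j : ℕ) (hj : j ≤ i) (hjn : j < n) :
    ∑ k ∈ range n, (if k ≤ i then (Nat.choose (2*i+3) (i-k) : ℤ) else 0)
        * (((k:ℤ)+1)*((k:ℤ)+2))
        * (if k ≤ j then (Nat.choose (2*j+3) (j-k) : ℤ) else 0)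
      = ((i:ℤ)+1)*((j:ℤ)+1) * catZ (i+j+2) := by
  rw [← keySum i j hj]
  rw [← Finset.sum_subset (Finset.range_subset_range.mpr (by omega : j+1 ≤ n))
    (fun x _ hx => by
      rw [if_neg (by simp at hx; omega : ¬ x ≤ j)]
      ring)]
  refine Finset.sum_congr rfl fun k hk => ?_
  have hkj : k ≤ j := by simp at hk; omega
  rw [if_pos hkj, if_pos (by omega : k ≤ i)]
  unfold term
  ring

lemma entry_sum' (n i j : ℕ) (hin : i < n) (hjn : j < n) :
    ∑ k ∈ range n, (if k ≤ i then (Nat.choose (2*i+3) (i-k) : ℤ) else 0)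
        * (((k:ℤ)+1)*((k:ℤ)+2))
        * (if k ≤ j then (Nat.choose (2*j+3) (j-k) : ℤ) else 0)
      = ((i:ℤ)+1)*((j:ℤ)+1) * catZ (i+j+2) := by
  rcases le_total j i with h | h
  · exact entry_sum n i j h hjn
  · have := entry_sum n j i h hin
    rw [show j+i+2 = i+j+2 by omega] at this
    rw [show ((i:ℤ)+1)*((j:ℤ)+1) * catZ (i+j+2) = ((j:ℤ)+1)*((i:ℤ)+1) * catZ (i+j+2) by ring,
      ← this]
    exact Finset.sum_congr rfl fun k _ => by ring

lemma prod_fact (n : ℕ) : ∏ k ∈ range n, (((k:ℤ)+1)*((k:ℤ)+2))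
    = (Nat.factorial n : ℤ) * (Nat.factorial (n+1) : ℤ) := by
  induction n with
  | zero => simp [Nat.factorial]
  | succ m ih =>
      rw [Finset.prod_range_succ, ih]
      simp [Nat.factorial_succ]
      push_cast
      ring

lemma prod_succ (n : ℕ) : ∏ k ∈ range n, ((k:ℤ)+1) = (Nat.factorial n : ℤ) := by
  induction n with
  | zero => simp [Nat.factorial]
  | succ m ih =>
      rw [Finset.prod_range_succ, ih]
      simp [Nat.factorial_succ]
      push_cast
      ring

lemma detCat (n : ℕ) :
    (Matrix.of fun i j : Fin n => catZ ((i:ℕ)+(j:ℕ)+2)).det = (n:ℤ)+1 := by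
  set M : Matrix (Fin n) (Fin n) ℤ := Matrix.of fun i j : Fin n => catZ ((i:ℕ)+(j:ℕ)+2) with hM
  set X : Matrix (Fin n) (Fin n) ℤ :=
    Matrix.of (fun i k : Fin n =>
      if (k:ℕ) ≤ (i:ℕ) then (Nat.choose (2*(i:ℕ)+3) ((i:ℕ)-(k:ℕ)) : ℤ) else 0) with hX
  set V : Matrix (Fin n) (Fin n) ℤ := Matrix.diagonal (fun i : Fin n => ((i:ℕ):ℤ)+1) with hV
  set D : Matrix (Fin n) (Fin n) ℤ :=
    Matrix.diagonal (fun k : Fin n => (((k:ℕ):ℤ)+1)*(((k:ℕ):ℤ)+2)) with hD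
  have hprod : V * M * V = X * D * Xᵀ := by
    ext i j
    have lhs : (V * M * V) i j = (((i:ℕ):ℤ)+1) * M i j * (((j:ℕ):ℤ)+1) := by
      rw [Matrix.mul_diagonal, Matrix.diagonal_mul]
    have rhs : (X * D * Xᵀ) i j = ∑ k : Fin n, X i k * ((((k:ℕ):ℤ)+1)*(((k:ℕ):ℤ)+2)) * X j k := by
      rw [Matrix.mul_apply]
      refine Finset.sum_congr rfl fun k _ => ?_
      rw [Matrix.mul_diagonal, Matrix.transpose_apply]
    rw [lhs, rhs]
    have : ∑ k : Fin n, X i k * ((((k:ℕ):ℤ)+1)*(((k:ℕ):ℤ)+2)) * X j k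
        = ∑ k ∈ range n, (if k ≤ (i:ℕ) then (Nat.choose (2*(i:ℕ)+3) ((i:ℕ)-k) : ℤ) else 0)
            * (((k:ℤ)+1)*((k:ℤ)+2))
            * (if k ≤ (j:ℕ) then (Nat.choose (2*(j:ℕ)+3) ((j:ℕ)-k) : ℤ) else 0) := by
      rw [← Fin.sum_univ_eq_sum_range]
      exact Finset.sum_congr rfl fun k _ => by simp [hX]
    rw [this, entry_sum' n i j i.isLt j.isLt]
    have hMij : M i j = catZ ((i:ℕ)+(j:ℕ)+2) := rfl
    rw [hMij]
    ring
  have hXlow : X.BlockTriangular OrderDual.toDual := by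
    intro a b hab
    have : (a:ℕ) < (b:ℕ) := hab
    show (if (b:ℕ) ≤ (a:ℕ) then _ else 0) = 0
    rw [if_neg (by omega)]
  have hdetX : X.det = 1 := by
    rw [Matrix.det_of_lowerTriangular X hXlow]
    have : ∀ a : Fin n, X a a = 1 := by
      intro a
      show (if (a:ℕ) ≤ (a:ℕ) then (Nat.choose (2*(a:ℕ)+3) ((a:ℕ)-(a:ℕ)) : ℤ) else 0) = 1
      rw [if_pos le_rfl, Nat.sub_self, Nat.choose_zero_right, Nat.cast_one]
    simp [this]
  have hdetV : V.det = (Nat.factorial n : ℤ) := by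
    rw [hV, Matrix.det_diagonal, Fin.prod_univ_eq_prod_range (fun k => ((k:ℤ)+1)), prod_succ]
  have hdetD : D.det = (Nat.factorial n : ℤ) * (Nat.factorial (n+1) : ℤ) := by
    rw [hD, Matrix.det_diagonal,
      Fin.prod_univ_eq_prod_range (fun k => (((k:ℕ):ℤ)+1)*(((k:ℕ):ℤ)+2)), prod_fact]
  have hdet2 : V.det * M.det * V.det = X.det * D.det * Xᵀ.det := by
    rw [← Matrix.det_mul, ← Matrix.det_mul, ← Matrix.det_mul, ← Matrix.det_mul, hprod]
  rw [hdetX, Matrix.det_transpose, hdetX, hdetV, hdetD] at hdet2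
  have hfne : (Nat.factorial n : ℤ) ≠ 0 := by
    exact_mod_cast Nat.factorial_ne_zero n
  have hfac : (Nat.factorial (n+1) : ℤ) = ((n:ℤ)+1) * (Nat.factorial n : ℤ) := by
    rw [Nat.factorial_succ]; push_cast; ring
  apply mul_left_cancel₀ hfne
  apply mul_left_cancel₀ hfne
  rw [show (Nat.factorial n : ℤ) * ((Nat.factorial n : ℤ) * M.det)
      = (Nat.factorial n : ℤ) * M.det * (Nat.factorial n : ℤ) by ring, hdet2, hfac]
  ring

theorem stmt_7 (n : ℕ) (hn : 1 ≤ n) :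
    (Matrix.of fun i j : Fin (n + 1) =>
      if (i : ℕ) = 0 then ((4 : ℤ) ^ (j : ℕ))
      else (Nat.choose (2 * ((i : ℕ) + (j : ℕ) + 1) - 1) ((i : ℕ) + (j : ℕ) + 1) : ℤ)).det
      = (-1) ^ n * (n + 1) := by
  set A : Matrix (Fin (n+1)) (Fin (n+1)) ℤ := Matrix.of fun i j : Fin (n + 1) =>
      if (i : ℕ) = 0 then ((4 : ℤ) ^ (j : ℕ))
      else (Nat.choose (2 * ((i : ℕ) + (j : ℕ) + 1) - 1) ((i : ℕ) + (j : ℕ) + 1) : ℤ) with hA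
  set Fm : Matrix (Fin (n+1)) (Fin (n+1)) ℤ :=
    Matrix.of (fun j k : Fin (n+1) => if (j:ℕ)+1 = (k:ℕ) then (-4:ℤ) else 0) with hFm
  set E : Matrix (Fin (n+1)) (Fin (n+1)) ℤ := 1 + Fm with hE
  set N : Matrix (Fin (n+1)) (Fin (n+1)) ℤ := Matrix.of (fun i l : Fin (n+1) =>
    if (i:ℕ) = 0 then (if (l:ℕ) = 0 then 1 else 0)
    else (if (l:ℕ) = 0 then (Nat.choose (2*((i:ℕ)+1)-1) ((i:ℕ)+1) : ℤ)
          else -catZ ((i:ℕ)+(l:ℕ)))) with hN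
  -- A * E = N
  have hAE : A * E = N := by
    rw [hE, Matrix.mul_add, Matrix.mul_one]
    ext i l
    have hAF : (A * Fm) i l
        = if h : (l:ℕ) = 0 then 0 else -4 * A i ⟨(l:ℕ)-1, by omega⟩ := by
      rw [Matrix.mul_apply]
      by_cases h0 : (l:ℕ) = 0
      · rw [dif_pos h0]
        refine Finset.sum_eq_zero fun j _ => ?_
        rw [hFm]
        show A i j * (if (j:ℕ)+1 = (l:ℕ) then (-4:ℤ) else 0) = 0
        rw [if_neg (by omega), mul_zero]
      · rw [dif_neg h0]
        have hlt : (l:ℕ)-1 < n+1 := by omega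
        rw [Finset.sum_eq_single (⟨(l:ℕ)-1, hlt⟩ : Fin (n+1))]
        · show A i _ * (if ((l:ℕ)-1)+1 = (l:ℕ) then (-4:ℤ) else 0) = _
          rw [if_pos (by omega)]
          ring
        · intro b _ hb
          show A i b * (if (b:ℕ)+1 = (l:ℕ) then (-4:ℤ) else 0) = 0
          rw [if_neg (fun hc => hb (by apply Fin.ext; simp; omega)), mul_zero]
        · intro h; exact absurd (Finset.mem_univ _) h
    show A i l + (A * Fm) i l = N i l
    rw [hAF]
    by_cases hi : (i:ℕ) = 0
    · by_cases h0 : (l:ℕ) = 0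
      · rw [dif_pos h0, hN, hA]
        show (if (i:ℕ) = 0 then ((4:ℤ)^(l:ℕ)) else _) + 0
          = (if (i:ℕ) = 0 then (if (l:ℕ) = 0 then 1 else 0) else _)
        rw [if_pos hi, if_pos hi, if_pos h0, h0]
        norm_num
      · rw [dif_neg h0]
        show (if (i:ℕ) = 0 then ((4:ℤ)^(l:ℕ)) else _) + -4 * (if (i:ℕ) = 0 then ((4:ℤ)^((l:ℕ)-1)) else _)
          = (if (i:ℕ) = 0 then (if (l:ℕ) = 0 then 1 else 0) else _)
        rw [if_pos hi, if_pos hi, if_pos hi, if_neg h0]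
        obtain ⟨m, hm⟩ : ∃ m, (l:ℕ) = m+1 := ⟨(l:ℕ)-1, by omega⟩
        rw [hm]
        simp [pow_succ]
        ring
    · by_cases h0 : (l:ℕ) = 0
      · rw [dif_pos h0]
        show (if (i:ℕ) = 0 then _ else (Nat.choose (2*((i:ℕ)+(l:ℕ)+1)-1) ((i:ℕ)+(l:ℕ)+1) : ℤ)) + 0
          = (if (i:ℕ) = 0 then _ else (if (l:ℕ) = 0 then (Nat.choose (2*((i:ℕ)+1)-1) ((i:ℕ)+1) : ℤ) else _))
        rw [if_neg hi, if_neg hi, if_pos h0, h0, add_zero]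
      · rw [dif_neg h0]
        show (if (i:ℕ) = 0 then _ else (Nat.choose (2*((i:ℕ)+(l:ℕ)+1)-1) ((i:ℕ)+(l:ℕ)+1) : ℤ))
            + -4 * (if (i:ℕ) = 0 then _ else (Nat.choose (2*((i:ℕ)+((l:ℕ)-1)+1)-1) ((i:ℕ)+((l:ℕ)-1)+1) : ℤ))
          = (if (i:ℕ) = 0 then _ else (if (l:ℕ) = 0 then _ else -catZ ((i:ℕ)+(l:ℕ))))
        rw [if_neg hi, if_neg hi, if_neg hi, if_neg h0]
        have hm1 : 1 ≤ (i:ℕ)+((l:ℕ)-1)+1 := by omega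
        have := P1 ((i:ℕ)+((l:ℕ)-1)+1) hm1
        have e1 : (i:ℕ)+((l:ℕ)-1)+1+1 = (i:ℕ)+(l:ℕ)+1 := by omega
        have e2 : (i:ℕ)+((l:ℕ)-1)+1 = (i:ℕ)+(l:ℕ) := by omega
        rw [e1, e2] at this
        rw [this, e2]
        ring
  -- det E = 1
  have hdetE : E.det = 1 := by
    have hup : E.BlockTriangular id := by
      intro a b hab
      have hba : (b:ℕ) < (a:ℕ) := hab
      show (1 : Matrix (Fin (n+1)) (Fin (n+1)) ℤ) a b + Fm a b = 0
      rw [Matrix.one_apply_ne (by exact fun hc => by subst hc; omega)]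
      rw [hFm]
      show (0:ℤ) + (if (a:ℕ)+1 = (b:ℕ) then (-4:ℤ) else 0) = 0
      rw [if_neg (by omega)]
      norm_num
    rw [Matrix.det_of_upperTriangular hup]
    have : ∀ a : Fin (n+1), E a a = 1 := by
      intro a
      show (1 : Matrix (Fin (n+1)) (Fin (n+1)) ℤ) a a + Fm a a = 1
      rw [Matrix.one_apply_eq]
      rw [hFm]
      show (1:ℤ) + (if (a:ℕ)+1 = (a:ℕ) then (-4:ℤ) else 0) = 1
      rw [if_neg (by omega)]
      norm_num
    simp [this]
  -- det N = det A
  have hdetN : N.det = A.det := by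
    rw [← hAE, Matrix.det_mul, hdetE, mul_one]
  -- expand det N along first row
  have hexp : N.det = ((N.submatrix Fin.succ Fin.succ).det) := by
    rw [Matrix.det_succ_row_zero]
    rw [Finset.sum_eq_single (0 : Fin (n+1))]
    · rw [show N 0 0 = 1 from by rw [hN]; simp, Fin.succAbove_zero]
      simp
    · intro b _ hb
      have hb0 : (b:ℕ) ≠ 0 := fun hc => hb (Fin.ext hc)
      have : N 0 b = 0 := by simp [hN, hb0, hb]
      rw [this]
      ring
    · intro h; exact absurd (Finset.mem_univ _) h
  have hsub : N.submatrix Fin.succ Fin.succ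
      = - Matrix.of (fun i j : Fin n => catZ ((i:ℕ)+(j:ℕ)+2)) := by
    ext i j
    have h1 : ((i.succ : Fin (n+1)):ℕ) ≠ 0 := by simp
    have h2 : ((j.succ : Fin (n+1)):ℕ) ≠ 0 := by simp
    simp only [hN, Matrix.submatrix_apply, Matrix.of_apply, Matrix.neg_apply, if_neg h1, if_neg h2]
    have h3 : (i.succ:ℕ)+(j.succ:ℕ) = (i:ℕ)+(j:ℕ)+2 := by simp [Fin.val_succ]; omega
    rw [h3]
  have hfinal : A.det = (-1)^n * ((n:ℤ)+1) := by
    rw [← hdetN, hexp, hsub, Matrix.det_neg, detCat]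
    simp
  exact hfinal
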